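/- Let n ≥ 2 be an integer, let mℓ ≤ 0 and mr ≥ 1 be real numbers, let d_1, …, d_{n−1} be positive real numbers, let t_2, …, t_{n−1} be real numbers each satisfying t_j ≤ 0 or t_j ≥ 1, and let λ̄_1, …, λ̄_{n−1} be real numbers. If B_j^− ≤ λ̄_j ≤ B_j^+ for every 1 ≤ j ≤ n−1, then for every s ∈ [0,1] one has mℓ ≤ S_n(s) ≤ mr. -/

import Mathlib

set_option maxHeartbeats 400000


/-- Nested (Horner-like) form of the tail of the Newton sum. -/
noncomputable def Qf (d t lam : ℕ → ℝ) (s : ℝ) : ℕ → ℕ → ℝ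
  | 0, j => lam j / ∏ k ∈ Finset.Icc 1 j, d k
  | m + 1, j => lam j / ∏ k ∈ Finset.Icc 1 j, d k + (s - t (j + 1)) * Qf d t lam s m (j + 1)

lemma Qf_eq (d t lam : ℕ → ℝ) (s : ℝ) : ∀ m j,
    Qf d t lam s m j =
      ∑ i ∈ Finset.Icc j (j + m),
        (lam i / ∏ k ∈ Finset.Icc 1 i, d k) * ∏ k ∈ Finset.Icc (j + 1) i, (s - t k) := by
  intro m
  induction m with
  | zero =>
    intro j
    simp [Qf]
  | succ m ih =>
    intro j
    have hsplit : Finset.Icc j (j + (m + 1)) = insert j (Finset.Ioc j (j + (m + 1))) :=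
      (Finset.Ioc_insert_left (by omega)).symm
    rw [hsplit, Finset.sum_insert (by simp)]
    have hIoc : Finset.Ioc j (j + (m + 1)) = Finset.Icc (j + 1) (j + 1 + m) := by
      rw [← Finset.Icc_add_one_left_eq_Ioc]; congr 1; omega
    rw [hIoc]
    have hsum : ∑ i ∈ Finset.Icc (j + 1) (j + 1 + m),
        (lam i / ∏ k ∈ Finset.Icc 1 i, d k) * ∏ k ∈ Finset.Icc (j + 1) i, (s - t k)
        = (s - t (j + 1)) * Qf d t lam s m (j + 1) := by
      rw [ih (j + 1), Finset.mul_sum]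
      apply Finset.sum_congr rfl
      intro i hi
      have hji : j + 1 ≤ i := (Finset.mem_Icc.mp hi).1
      have hp : Finset.Icc (j + 1) i = insert (j + 1) (Finset.Ioc (j + 1) i) :=
        (Finset.Ioc_insert_left hji).symm
      rw [hp, Finset.prod_insert (by simp), ← Finset.Icc_add_one_left_eq_Ioc]
      ring
    rw [hsum]
    simp [Qf]



/-- The expanded normalized Newton form
`S_n(s) = s + Σ_{j=1}^{n−1} (λ̄_j / (d_1⋯d_j)) · s·(s−1) · Π_{k=2}^{j} (s − t_k)`. -/
noncomputable def Sn (n : ℕ) (d t lam : ℕ → ℝ) (s : ℝ) : ℝ :=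
  s + ∑ j ∈ Finset.Icc 1 (n - 1),
    (lam j / ∏ k ∈ Finset.Icc 1 j, d k) * (s * (s - 1)) * ∏ k ∈ Finset.Icc 2 j, (s - t k)

/-- Positivity-preserving bound recursion: if the scaled divided-difference ratios `λ̄_j`
lie within the recursively defined bounds `B_j^± (with PPI initialization), then
`mℓ ≤ S_n(s) ≤ mr` on `[0,1]`. -/
theorem ppi_Sn_bounds
    (n : ℕ) (hn : 2 ≤ n)
    (ml mr : ℝ) (hml : ml ≤ 0) (hmr : 1 ≤ mr)
    (d t lam Bm Bp : ℕ → ℝ)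
    (hd : ∀ j, 1 ≤ j → j ≤ n - 1 → 0 < d j)
    (ht : ∀ j, 2 ≤ j → j ≤ n - 1 → t j ≤ 0 ∨ 1 ≤ t j)
    (hBm1 : Bm 1 = (-4 * (mr - 1) - 1) * d 1)
    (hBp1 : Bp 1 = (-4 * ml + 1) * d 1)
    (hBrec : ∀ j, 2 ≤ j → j ≤ n - 1 →
      (t j ≤ 0 →
        Bm j = (Bm (j - 1) - lam (j - 1)) * d j / (1 - t j) ∧
        Bp j = (Bp (j - 1) - lam (j - 1)) * d j / (1 - t j)) ∧
      (1 ≤ t j →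
        Bm j = (Bp (j - 1) - lam (j - 1)) * d j / (-t j) ∧
        Bp j = (Bm (j - 1) - lam (j - 1)) * d j / (-t j)))
    (hlam : ∀ j, 1 ≤ j → j ≤ n - 1 → Bm j ≤ lam j ∧ lam j ≤ Bp j) :
    ∀ s ∈ Set.Icc (0 : ℝ) 1, ml ≤ Sn n d t lam s ∧ Sn n d t lam s ≤ mr := by
  intro s hs
  obtain ⟨hs0, hs1⟩ := hs
  -- positivity of the products
  have hD : ∀ j, 1 ≤ j → j ≤ n - 1 → 0 < ∏ k ∈ Finset.Icc 1 j, d k := by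
    intro j h1 h2
    apply Finset.prod_pos
    intro k hk
    have := Finset.mem_Icc.mp hk
    exact hd k this.1 (le_trans this.2 h2)
  -- key bound by downward induction
  have key : ∀ m j, 1 ≤ j → j + m = n - 1 →
      Bm j / ∏ k ∈ Finset.Icc 1 j, d k ≤ Qf d t lam s m j ∧
      Qf d t lam s m j ≤ Bp j / ∏ k ∈ Finset.Icc 1 j, d k := by
    intro m
    induction m with
    | zero =>
      intro j h1 h2
      have hj : j ≤ n - 1 := by omega
      have hDj := hD j h1 hj
      obtain ⟨hl, hr⟩ := hlam j h1 hj
      constructor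
      · exact (div_le_div_iff_of_pos_right hDj).mpr hl
      · exact (div_le_div_iff_of_pos_right hDj).mpr hr
    | succ m ih =>
      intro j h1 h2
      have hj : j ≤ n - 1 := by omega
      have hj1 : j + 1 ≤ n - 1 := by omega
      have h2j : 2 ≤ j + 1 := by omega
      have hDj := hD j h1 hj
      have hdj1 := hd (j + 1) (by omega) hj1
      have hDj1 : (∏ k ∈ Finset.Icc 1 (j + 1), d k) = (∏ k ∈ Finset.Icc 1 j, d k) * d (j + 1) :=
        Finset.prod_Icc_succ_top (by omega) d
      obtain ⟨ihl, ihr⟩ := ih (j + 1) (by omega) (by omega)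
      rw [hDj1] at ihl ihr
      have goalform : Qf d t lam s (m + 1) j
          = lam j / (∏ k ∈ Finset.Icc 1 j, d k) + (s - t (j + 1)) * Qf d t lam s m (j + 1) := by
        simp only [Qf]
      rw [goalform]
      set D := ∏ k ∈ Finset.Icc 1 j, d k with hDdef
      set x := Qf d t lam s m (j + 1) with hxdef
      obtain ⟨hAL, hLB⟩ := hlam j h1 hj
      have hrec := hBrec (j + 1) h2j hj1
      simp only [Nat.add_sub_cancel] at hrec
      clear_value x
      clear_value D
      -- reduce both goals to multiplied-out statements
      have reduce : ∀ C : ℕ → ℝ,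
          (C j ≤ lam j + (s - t (j + 1)) * (D * x) → C j / D ≤ lam j / D + (s - t (j + 1)) * x) ∧
          (lam j + (s - t (j + 1)) * (D * x) ≤ C j → lam j / D + (s - t (j + 1)) * x ≤ C j / D) := by
        intro C
        constructor
        · intro h
          have := (div_le_div_iff_of_pos_right hDj).mpr h
          calc C j / D ≤ (lam j + (s - t (j + 1)) * (D * x)) / D := this
            _ = lam j / D + (s - t (j + 1)) * x := by
                field_simp
        · intro h
          have := (div_le_div_iff_of_pos_right hDj).mpr h
          calc lam j / D + (s - t (j + 1)) * x
              = (lam j + (s - t (j + 1)) * (D * x)) / D := by field_simp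
            _ ≤ C j / D := this
      rcases ht (j + 1) h2j hj1 with htc | htc
      · -- t (j+1) ≤ 0, so 0 ≤ s - t ≤ 1 - t
        obtain ⟨e1, e2⟩ := hrec.1 htc
        have hc : (0 : ℝ) < 1 - t (j + 1) := by linarith
        have hlow : Bm j - lam j ≤ (1 - t (j + 1)) * (D * x) := by
          rw [e1] at ihl
          have h1 : (Bm j - lam j) * d (j + 1) / (1 - t (j + 1)) ≤ x * (D * d (j + 1)) :=
            (div_le_iff₀ (by positivity)).mp ihl
          have h2 : (Bm j - lam j) * d (j + 1) ≤ (x * (D * d (j + 1))) * (1 - t (j + 1)) :=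
            (div_le_iff₀ hc).mp h1
          have h3 : (Bm j - lam j) * d (j + 1) ≤ ((1 - t (j + 1)) * (D * x)) * d (j + 1) := by
            linarith [h2]
          exact le_of_mul_le_mul_right h3 hdj1
        have hup : (1 - t (j + 1)) * (D * x) ≤ Bp j - lam j := by
          rw [e2] at ihr
          have h1 : x * (D * d (j + 1)) ≤ (Bp j - lam j) * d (j + 1) / (1 - t (j + 1)) :=
            (le_div_iff₀ (by positivity)).mp ihr
          have h2 : (x * (D * d (j + 1))) * (1 - t (j + 1)) ≤ (Bp j - lam j) * d (j + 1) :=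
            (le_div_iff₀ hc).mp h1
          have h3 : ((1 - t (j + 1)) * (D * x)) * d (j + 1) ≤ (Bp j - lam j) * d (j + 1) := by
            linarith [h2]
          exact le_of_mul_le_mul_right h3 hdj1
        have ha0 : (0 : ℝ) ≤ s - t (j + 1) := by linarith
        have hac : s - t (j + 1) ≤ 1 - t (j + 1) := by linarith
        constructor
        · apply (reduce Bm).1
          rcases le_total 0 (D * x) with hy | hy
          · linarith [mul_nonneg ha0 hy]
          · linarith [mul_le_mul_of_nonpos_right hac hy]
        · apply (reduce Bp).2
          rcases le_total 0 (D * x) with hy | hy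
          · linarith [mul_le_mul_of_nonneg_right hac hy]
          · linarith [mul_nonneg ha0 (neg_nonneg.mpr hy)]
      · -- 1 ≤ t (j+1), so -t ≤ s - t ≤ 1 - t ≤ 0
        obtain ⟨e1, e2⟩ := hrec.2 htc
        have hneg : (- t (j + 1)) < 0 := by linarith
        have hup : (- t (j + 1)) * (D * x) ≤ Bp j - lam j := by
          rw [e1] at ihl
          have h1 : (Bp j - lam j) * d (j + 1) / (- t (j + 1)) ≤ x * (D * d (j + 1)) :=
            (div_le_iff₀ (by positivity)).mp ihl
          have h2 : (x * (D * d (j + 1))) * (- t (j + 1)) ≤ (Bp j - lam j) * d (j + 1) :=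
            (div_le_iff_of_neg hneg).mp h1
          have h3 : ((- t (j + 1)) * (D * x)) * d (j + 1) ≤ (Bp j - lam j) * d (j + 1) := by
            linarith [h2]
          exact le_of_mul_le_mul_right h3 hdj1
        have hlow : Bm j - lam j ≤ (- t (j + 1)) * (D * x) := by
          rw [e2] at ihr
          have h1 : x * (D * d (j + 1)) ≤ (Bm j - lam j) * d (j + 1) / (- t (j + 1)) :=
            (le_div_iff₀ (by positivity)).mp ihr
          have h2 : (Bm j - lam j) * d (j + 1) ≤ (x * (D * d (j + 1))) * (- t (j + 1)) :=
            (le_div_iff_of_neg hneg).mp h1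
          have h3 : (Bm j - lam j) * d (j + 1) ≤ ((- t (j + 1)) * (D * x)) * d (j + 1) := by
            linarith [h2]
          exact le_of_mul_le_mul_right h3 hdj1
        have ha0 : s - t (j + 1) ≤ 0 := by linarith
        have hac : - t (j + 1) ≤ s - t (j + 1) := by linarith
        constructor
        · apply (reduce Bm).1
          rcases le_total 0 (D * x) with hy | hy
          · linarith [mul_le_mul_of_nonneg_right hac hy]
          · linarith [mul_nonneg (neg_nonneg.mpr ha0) (neg_nonneg.mpr hy)]
        · apply (reduce Bp).2
          rcases le_total 0 (D * x) with hy | hy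
          · linarith [mul_nonneg (neg_nonneg.mpr ha0) hy]
          · linarith [mul_le_mul_of_nonpos_right hac hy]
      -- end cases
  -- closed form of Sn
  have hSn : Sn n d t lam s = s + s * (s - 1) * Qf d t lam s (n - 2) 1 := by
    rw [Sn, Qf_eq]
    have h1 : 1 + (n - 2) = n - 1 := by omega
    rw [h1, Finset.mul_sum]
    congr 1
    apply Finset.sum_congr rfl
    intro i hi
    ring
  have hd1 := hd 1 le_rfl (by omega)
  obtain ⟨hQl, hQr⟩ := key (n - 2) 1 le_rfl (by omega)
  have hP1 : (∏ k ∈ Finset.Icc 1 1, d k) = d 1 := by simp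
  rw [hP1, hBm1] at hQl
  rw [hP1, hBp1] at hQr
  have hQl' : 3 - 4 * mr ≤ Qf d t lam s (n - 2) 1 := by
    have : (-4 * (mr - 1) - 1) * d 1 / d 1 = 3 - 4 * mr := by
      field_simp; ring
    linarith [hQl, this.symm.le.trans hQl]
  have hQr' : Qf d t lam s (n - 2) 1 ≤ 1 - 4 * ml := by
    have : (-4 * ml + 1) * d 1 / d 1 = 1 - 4 * ml := by
      field_simp; ring
    linarith [hQr, hQr.trans this.le]
  set Q := Qf d t lam s (n - 2) 1
  have hss : s * (s - 1) ≤ 0 := by nlinarith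
  constructor
  · rw [hSn]
    have h1 : s * (s - 1) * Q ≥ s * (s - 1) * (1 - 4 * ml) :=
      mul_le_mul_of_nonpos_left hQr' hss
    linarith [h1, sq_nonneg s, mul_nonneg (neg_nonneg.mpr hml) (sq_nonneg (2 * s - 1))]
  · rw [hSn]
    have h1 : s * (s - 1) * Q ≤ s * (s - 1) * (3 - 4 * mr) :=
      mul_le_mul_of_nonpos_left hQl' hss
    linarith [h1, sq_nonneg (s - 1), mul_nonneg (by linarith : (0:ℝ) ≤ mr - 1) (sq_nonneg (2 * s - 1))]
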